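/- Let H ∈ 𝔽₂^{m×n} be a (w_c,w_r)-regular matrix whose Tanner graph is connected, and let μ₁ and μ₂ denote the largest and second largest eigenvalues of the real matrix L = HᵀH (H viewed as a 0-1 matrix over ℝ). Then μ₂ < μ₁, and every nonzero pseudocodeword x ∈ K(H) satisfies w_AWGNC(x) ≥ n·(2w_c − μ₂)/(μ₁ − μ₂); in particular w_AWGNC^min(H) ≥ n·(2w_c − μ₂)/(μ₁ − μ₂). -/

import Mathlib

open Matrix BigOperators Finset

section Defs

variable {J I : Type*} [Fintype J] [Fintype I] [DecidableEq I]

/-- The support of row `j` of a binary matrix `H`. -/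
def rowSupp (H : Matrix J I (ZMod 2)) (j : J) : Finset I :=
  Finset.univ.filter fun i => H j i = 1

/-- The fundamental cone of a binary matrix `H`. -/
def fundCone (H : Matrix J I (ZMod 2)) : Set (I → ℝ) :=
  {x | (∀ i, 0 ≤ x i) ∧
    ∀ j : J, ∀ ℓ ∈ rowSupp H j, x ℓ ≤ ∑ i ∈ (rowSupp H j).erase ℓ, x i}

/-- BEC pseudoweight: size of the support. -/
noncomputable def wBEC (x : I → ℝ) : ℝ := ({i | x i ≠ 0}.ncard : ℝ)

/-- AWGNC pseudoweight. -/
noncomputable def wAWGNC (x : I → ℝ) : ℝ := (∑ i, x i) ^ 2 / ∑ i, x i ^ 2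

/-- Max-fractional weight. -/
noncomputable def wMaxFrac (x : I → ℝ) : ℝ := (∑ i, x i) / sSup (Set.range x)

/-- `H` is a parity-check matrix of the code `C`. -/
def IsParityCheck (H : Matrix J I (ZMod 2)) (C : Submodule (ZMod 2) (I → ZMod 2)) : Prop :=
  ∀ c, c ∈ C ↔ H.mulVec c = 0

/-- Minimum Hamming distance of a code. -/
noncomputable def minDist (C : Submodule (ZMod 2) (I → ZMod 2)) : ℕ :=
  sInf {d | ∃ c ∈ C, c ≠ 0 ∧ hammingNorm c = d}

/-- Minimum pseudoweight of `H` w.r.t. pseudoweight function `w`: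
the infimum of `w` over all nonzero pseudocodewords (`⊤` if there are none). -/
noncomputable def minPW (w : (I → ℝ) → ℝ) (H : Matrix J I (ZMod 2)) : EReal :=
  sInf ((fun x => (w x : EReal)) '' (fundCone H \ {0}))

/-- The chain (connectivity) relation associated with a binary matrix whose rows
have weight 2: `i` and `i'` are related iff they are equal or joined by a chain of rows
whose supports are exactly consecutive pairs. -/
def chainRel (H : Matrix J I (ZMod 2)) (i i' : I) : Prop :=
  i = i' ∨ ∃ ℓ : ℕ, 1 ≤ ℓ ∧ ∃ (c : Fin (ℓ + 1) → I) (r : Fin ℓ → J),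
    c 0 = i ∧ c (Fin.last ℓ) = i' ∧
    ∀ t : Fin ℓ, rowSupp H (r t) = {c t.castSucc, c t.succ}

/-- The 0-1 real matrix associated with a binary matrix. -/
def toRealMatrix (H : Matrix J I (ZMod 2)) : Matrix J I ℝ :=
  Matrix.of fun j i => if H j i = 1 then (1 : ℝ) else 0

/-- The Tanner graph of a binary matrix. -/
def tannerGraph (H : Matrix J I (ZMod 2)) : SimpleGraph (J ⊕ I) :=
  SimpleGraph.fromRel fun u v => ∃ j i, u = Sum.inl j ∧ v = Sum.inr i ∧ H j i = 1

end Defs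

/-- The multiset of (real) eigenvalues, with multiplicity, of a real square matrix:
the real roots of its characteristic polynomial. -/
noncomputable def eigMult {ι : Type*} [Fintype ι] [DecidableEq ι] (A : Matrix ι ι ℝ) :
    Multiset ℝ :=
  A.charpoly.roots

section FinDefs

variable {n : ℕ}

/-- The non-increasing rearrangement of a real vector. -/
noncomputable def sortDesc (x : Fin n → ℝ) : Fin n → ℝ :=
  fun i => x (Tuple.sort (fun j => -x j) i)

/-- `Φ(ξ) = ∫₀^ξ φ`, where `φ(ξ) = x'_i` for `i - 1 < ξ ≤ i` and `x'` is the
non-increasing rearrangement of `x`. -/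
noncomputable def bigPhi (x : Fin n → ℝ) (ξ : ℝ) : ℝ :=
  ∑ i : Fin n, sortDesc x i * min 1 (max 0 (ξ - (i : ℝ)))

/-- BSC pseudoweight: `2 Φ⁻¹(Φ(n)/2)`. -/
noncomputable def wBSC (x : Fin n → ℝ) : ℝ :=
  2 * sInf {ξ : ℝ | bigPhi x (n : ℝ) / 2 ≤ bigPhi x ξ}

/-- The pseudocodeword redundancy of a code `C` w.r.t. the pseudoweight function `w`:
the smallest number of rows of a parity-check matrix `H` of `C` whose minimum
pseudoweight equals the minimum distance of `C` (`⊤` if there is no such matrix). -/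
noncomputable def pcRedundancy (w : (Fin n → ℝ) → ℝ)
    (C : Submodule (ZMod 2) (Fin n → ZMod 2)) : ℕ∞ :=
  sInf {k : ℕ∞ | ∃ (m : ℕ) (H : Matrix (Fin m) (Fin n) (ZMod 2)),
    k = (m : ℕ∞) ∧ IsParityCheck H C ∧ minPW w H = ((minDist C : ℝ) : EReal)}

end FinDefs

-- ## Aux lemmas

section Aux1

variable {m n : ℕ}

lemma mem_rowSupp' {H : Matrix (Fin m) (Fin n) (ZMod 2)} {j : Fin m} {i : Fin n} :
    i ∈ rowSupp H j ↔ H j i = 1 := by simp [rowSupp]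

lemma toReal_nonneg' (H : Matrix (Fin m) (Fin n) (ZMod 2)) (j : Fin m) (i : Fin n) :
    0 ≤ toRealMatrix H j i := by
  simp only [toRealMatrix, Matrix.of_apply]
  split_ifs <;> norm_num

lemma rowSumA (H : Matrix (Fin m) (Fin n) (ZMod 2)) (j : Fin m) :
    ∑ i, toRealMatrix H j i = ((rowSupp H j).card : ℝ) := by
  simp [toRealMatrix, Finset.sum_boole, rowSupp]

lemma colSumA (H : Matrix (Fin m) (Fin n) (ZMod 2)) (i : Fin n) :
    ∑ j, toRealMatrix H j i = ((Finset.univ.filter fun j => H j i = 1).card : ℝ) := by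
  simp [toRealMatrix, Finset.sum_boole]

lemma Lentry (H : Matrix (Fin m) (Fin n) (ZMod 2)) (i i' : Fin n) :
    ((toRealMatrix H)ᵀ * toRealMatrix H) i i' = ∑ j, toRealMatrix H j i * toRealMatrix H j i' := by
  simp [Matrix.mul_apply, Matrix.transpose_apply]

lemma Lentry_nonneg (H : Matrix (Fin m) (Fin n) (ZMod 2)) (i i' : Fin n) :
    0 ≤ ((toRealMatrix H)ᵀ * toRealMatrix H) i i' := by
  rw [Lentry]
  exact Finset.sum_nonneg fun j _ => mul_nonneg (toReal_nonneg' H j i) (toReal_nonneg' H j i')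

lemma rowSumL {H : Matrix (Fin m) (Fin n) (ZMod 2)} {wc wr : ℕ}
    (hcol : ∀ i, (Finset.univ.filter fun j => H j i = 1).card = wc)
    (hrow : ∀ j, (rowSupp H j).card = wr) (i : Fin n) :
    ∑ i', ((toRealMatrix H)ᵀ * toRealMatrix H) i i' = (wc : ℝ) * (wr : ℝ) := by
  simp only [Lentry]
  rw [Finset.sum_comm]
  have : ∀ j, ∑ i', toRealMatrix H j i * toRealMatrix H j i'
      = toRealMatrix H j i * (wr : ℝ) := by
    intro j
    rw [← Finset.mul_sum, rowSumA, hrow]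
  rw [Finset.sum_congr rfl fun j _ => this j, ← Finset.sum_mul, colSumA, hcol, mul_comm]

lemma mulVec_one_L {H : Matrix (Fin m) (Fin n) (ZMod 2)} {wc wr : ℕ}
    (hcol : ∀ i, (Finset.univ.filter fun j => H j i = 1).card = wc)
    (hrow : ∀ j, (rowSupp H j).card = wr) :
    ((toRealMatrix H)ᵀ * toRealMatrix H) *ᵥ (fun _ => (1 : ℝ))
      = ((wc : ℝ) * (wr : ℝ)) • (fun _ => (1 : ℝ)) := by
  funext i
  simp only [Matrix.mulVec, dotProduct, mul_one, Pi.smul_apply, smul_eq_mul]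
  rw [rowSumL hcol hrow i]

end Aux1

section Aux2

variable {m n : ℕ}

/-- Two columns share a row. -/
def shareRow (H : Matrix (Fin m) (Fin n) (ZMod 2)) (i i' : Fin n) : Prop :=
  ∃ j, i ∈ rowSupp H j ∧ i' ∈ rowSupp H j

/-- The set of columns attached to a vertex of the Tanner graph. -/
def clVert (H : Matrix (Fin m) (Fin n) (ZMod 2)) : Fin m ⊕ Fin n → Finset (Fin n)
  | Sum.inl j => rowSupp H j
  | Sum.inr i => {i}

lemma same_cl {H : Matrix (Fin m) (Fin n) (ZMod 2)} {u : Fin m ⊕ Fin n} {a b : Fin n}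
    (ha : a ∈ clVert H u) (hb : b ∈ clVert H u) :
    Relation.ReflTransGen (shareRow H) a b := by
  cases u with
  | inl j => exact Relation.ReflTransGen.single ⟨j, ha, hb⟩
  | inr i =>
    simp only [clVert, Finset.mem_singleton] at ha hb
    rw [ha, hb]

lemma walk_rel {H : Matrix (Fin m) (Fin n) (ZMod 2)} {u v : Fin m ⊕ Fin n}
    (p : (tannerGraph H).Walk u v) :
    ∀ a ∈ clVert H u, ∀ b ∈ clVert H v, Relation.ReflTransGen (shareRow H) a b := by
  induction p with
  | nil => exact fun a ha b hb => same_cl ha hb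
  | @cons u w v h p ih =>
    intro a ha b hb
    obtain ⟨t, htu, htw⟩ : ∃ t, t ∈ clVert H u ∧ t ∈ clVert H w := by
      rw [tannerGraph, SimpleGraph.fromRel_adj] at h
      rcases h.2 with ⟨j, i, rfl, rfl, hji⟩ | ⟨j, i, rfl, rfl, hji⟩
      · exact ⟨i, mem_rowSupp'.mpr hji, Finset.mem_singleton_self i⟩
      · exact ⟨i, Finset.mem_singleton_self i, mem_rowSupp'.mpr hji⟩
    exact (same_cl ha htu).trans (ih t htw b hb)

lemma share_reach {H : Matrix (Fin m) (Fin n) (ZMod 2)}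
    (hconn : (tannerGraph H).Connected) (i i' : Fin n) :
    Relation.ReflTransGen (shareRow H) i i' := by
  obtain ⟨p⟩ := hconn.preconnected (Sum.inr i) (Sum.inr i')
  exact walk_rel p i (Finset.mem_singleton_self i) i' (Finset.mem_singleton_self i')

/-- Perron-type lemma: any eigenvector of `L` for the eigenvalue `wc * wr` is constant. -/
lemma perron_const {H : Matrix (Fin m) (Fin n) (ZMod 2)} {wc wr : ℕ}
    (hcol : ∀ i, (Finset.univ.filter fun j => H j i = 1).card = wc)
    (hrow : ∀ j, (rowSupp H j).card = wr)
    (hconn : (tannerGraph H).Connected)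
    (v : Fin n → ℝ)
    (hv : ((toRealMatrix H)ᵀ * toRealMatrix H) *ᵥ v = ((wc : ℝ) * (wr : ℝ)) • v) :
    ∀ i i', v i = v i' := by
  intro i i'
  set A := toRealMatrix H with hA
  set L := Aᵀ * A with hL
  obtain ⟨i₀, -, hmax⟩ := Finset.exists_max_image Finset.univ v ⟨i, Finset.mem_univ i⟩
  set w : Fin n → ℝ := fun k => v i₀ - v k with hw
  have hwnn : ∀ k, 0 ≤ w k := fun k => sub_nonneg.2 (hmax k (Finset.mem_univ k))
  have hLw : L *ᵥ w = ((wc : ℝ) * (wr : ℝ)) • w := by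
    have h1 : w = v i₀ • (fun _ => (1:ℝ)) - v := by funext k; simp [hw]
    rw [h1, Matrix.mulVec_sub, Matrix.mulVec_smul, mulVec_one_L hcol hrow, hv]
    funext k
    simp only [Pi.sub_apply, Pi.smul_apply, smul_eq_mul]
    ring
  have hstep : ∀ b c, w b = 0 → shareRow H b c → w c = 0 := by
    intro b c hb ⟨j, hjb, hjc⟩
    have hzero : ∑ k, L b k * w k = 0 := by
      have := congrFun hLw b
      simp only [Matrix.mulVec, dotProduct, Pi.smul_apply, smul_eq_mul] at this
      rw [this, hb, mul_zero]
    have hterms : ∀ k ∈ Finset.univ, 0 ≤ L b k * w k :=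
      fun k _ => mul_nonneg (Lentry_nonneg H b k) (hwnn k)
    have hc0 : L b c * w c = 0 :=
      (Finset.sum_eq_zero_iff_of_nonneg hterms).mp hzero c (Finset.mem_univ c)
    have hLbc : (1 : ℝ) ≤ L b c := by
      rw [hL, Lentry]
      have h1 : toRealMatrix H j b * toRealMatrix H j c = 1 := by
        rw [mem_rowSupp'] at hjb hjc
        simp [toRealMatrix, hjb, hjc]
      calc (1:ℝ) = toRealMatrix H j b * toRealMatrix H j c := h1.symm
        _ ≤ ∑ j', toRealMatrix H j' b * toRealMatrix H j' c :=
          Finset.single_le_sum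
            (fun j' _ => mul_nonneg (toReal_nonneg' H j' b) (toReal_nonneg' H j' c))
            (Finset.mem_univ j)
    have : w c = 0 := by
      by_contra hne
      have : 0 < L b c * w c := mul_pos (by linarith) (lt_of_le_of_ne (hwnn c) (Ne.symm hne))
      linarith [hc0]
    exact this
  have hzero : ∀ k, w k = 0 := by
    intro k
    have hr := share_reach hconn i₀ k
    induction hr with
    | refl => simp [hw]
    | tail hrt hstepr ih => exact hstep _ _ ih hstepr
  have h1 : v i = v i₀ := by have := hzero i; simp [hw] at this; linarith
  have h2 : v i' = v i₀ := by have := hzero i'; simp [hw] at this; linarith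
  rw [h1, h2]

end Aux2

section Aux3

variable {m n : ℕ}

lemma quad_eq (H : Matrix (Fin m) (Fin n) (ZMod 2)) (x : Fin n → ℝ) :
    x ⬝ᵥ (((toRealMatrix H)ᵀ * toRealMatrix H) *ᵥ x) = ∑ j, (∑ i ∈ rowSupp H j, x i) ^ 2 := by
  have hAx : ∀ j, (toRealMatrix H *ᵥ x) j = ∑ i ∈ rowSupp H j, x i := by
    intro j
    simp only [Matrix.mulVec, dotProduct, toRealMatrix, Matrix.of_apply, rowSupp,
      Finset.sum_filter, ite_mul, one_mul, zero_mul]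
  rw [← Matrix.mulVec_mulVec, Matrix.dotProduct_mulVec, Matrix.vecMul_transpose,
    dotProduct]
  exact Finset.sum_congr rfl fun j _ => by rw [hAx]; ring

lemma cone_bound {H : Matrix (Fin m) (Fin n) (ZMod 2)} {wc : ℕ}
    (hcol : ∀ i, (Finset.univ.filter fun j => H j i = 1).card = wc)
    {x : Fin n → ℝ} (hx : x ∈ fundCone H) :
    2 * (wc : ℝ) * ∑ i, x i ^ 2 ≤ ∑ j, (∑ i ∈ rowSupp H j, x i) ^ 2 := by
  have per_j : ∀ j, 2 * ∑ ℓ ∈ rowSupp H j, x ℓ ^ 2 ≤ (∑ i ∈ rowSupp H j, x i) ^ 2 := by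
    intro j
    set S := ∑ i ∈ rowSupp H j, x i with hS
    have h2 : ∀ ℓ ∈ rowSupp H j, 2 * x ℓ ≤ S := by
      intro ℓ hℓ
      have h3 := hx.2 j ℓ hℓ
      have hsplit : S = x ℓ + ∑ i ∈ (rowSupp H j).erase ℓ, x i :=
        (Finset.add_sum_erase _ _ hℓ).symm
      linarith
    calc 2 * ∑ ℓ ∈ rowSupp H j, x ℓ ^ 2 = ∑ ℓ ∈ rowSupp H j, (2 * x ℓ) * x ℓ := by
          rw [Finset.mul_sum]; exact Finset.sum_congr rfl fun ℓ _ => by ring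
      _ ≤ ∑ ℓ ∈ rowSupp H j, S * x ℓ :=
          Finset.sum_le_sum fun ℓ hℓ => mul_le_mul_of_nonneg_right (h2 ℓ hℓ) (hx.1 ℓ)
      _ = S ^ 2 := by rw [← Finset.mul_sum]; ring
  have hswap : ∑ j, ∑ ℓ ∈ rowSupp H j, x ℓ ^ 2 = (wc : ℝ) * ∑ ℓ, x ℓ ^ 2 := by
    have h1 : ∀ j : Fin m, ∑ ℓ ∈ rowSupp H j, x ℓ ^ 2
        = ∑ ℓ, if H j ℓ = 1 then x ℓ ^ 2 else 0 := by
      intro j; rw [rowSupp, Finset.sum_filter]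
    rw [Finset.sum_congr rfl fun j _ => h1 j, Finset.sum_comm]
    rw [Finset.mul_sum]
    refine Finset.sum_congr rfl fun ℓ _ => ?_
    have : ∀ j : Fin m, (if H j ℓ = 1 then x ℓ ^ 2 else 0)
        = (if H j ℓ = 1 then (1:ℝ) else 0) * x ℓ ^ 2 := by
      intro j; split_ifs <;> ring
    rw [Finset.sum_congr rfl fun j _ => this j, ← Finset.sum_mul, Finset.sum_boole, hcol]
  calc 2 * (wc : ℝ) * ∑ i, x i ^ 2 = 2 * ∑ j, ∑ ℓ ∈ rowSupp H j, x ℓ ^ 2 := by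
        rw [hswap]; ring
    _ ≤ ∑ j, (∑ i ∈ rowSupp H j, x i) ^ 2 := by
        rw [Finset.mul_sum]
        exact Finset.sum_le_sum fun j _ => per_j j

end Aux3

section Aux4

open Polynomial

lemma charpoly_conj' {k : Type*} [Fintype k] [DecidableEq k]
    (P D Q : Matrix k k ℝ) (h1 : P * Q = 1) :
    (P * D * Q).charpoly = D.charpoly := by
  have hPQ : (P.map (C : ℝ →+* ℝ[X])) * (Q.map (C : ℝ →+* ℝ[X])) = 1 := by
    rw [← Matrix.map_mul, h1, Matrix.map_one _ (map_zero _) (map_one _)]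
  have hcomm : ∀ B : Matrix k k ℝ[X],
      B * Matrix.scalar k (X : ℝ[X]) = Matrix.scalar k (X : ℝ[X]) * B :=
    fun B => (Matrix.scalar_commute (X : ℝ[X]) (fun r' => Commute.all _ _) B).symm
  have key : Matrix.charmatrix (P * D * Q)
      = P.map (C : ℝ →+* ℝ[X]) * Matrix.charmatrix D * Q.map (C : ℝ →+* ℝ[X]) := by
    rw [Matrix.charmatrix, Matrix.charmatrix, RingHom.mapMatrix_apply, RingHom.mapMatrix_apply,
      mul_sub, sub_mul]
    congr 1
    · rw [hcomm (P.map (C : ℝ →+* ℝ[X])), mul_assoc, hPQ, mul_one]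
    · rw [← Matrix.map_mul, ← Matrix.map_mul]
  rw [Matrix.charpoly, Matrix.charpoly, key, Matrix.det_mul, Matrix.det_mul]
  have hdet : (P.map (C : ℝ →+* ℝ[X])).det * (Q.map (C : ℝ →+* ℝ[X])).det = 1 := by
    rw [← Matrix.det_mul, hPQ, Matrix.det_one]
  calc (P.map (C : ℝ →+* ℝ[X])).det * (Matrix.charmatrix D).det
        * (Q.map (C : ℝ →+* ℝ[X])).det
      = (Matrix.charmatrix D).det
        * ((P.map (C : ℝ →+* ℝ[X])).det * (Q.map (C : ℝ →+* ℝ[X])).det) := by ring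
    _ = (Matrix.charmatrix D).det := by rw [hdet, mul_one]

lemma charpoly_diag {k : ℕ} (d : Fin k → ℝ) :
    (Matrix.diagonal d).charpoly = ∏ i, (X - C (d i)) := by
  rw [Matrix.charpoly_of_upperTriangular _ (Matrix.blockTriangular_diagonal d)]
  exact Finset.prod_congr rfl fun i _ => by rw [Matrix.diagonal_apply_eq]

lemma eigMult_eq {k : ℕ} (A : Matrix (Fin k) (Fin k) ℝ) (hA : A.IsHermitian) :
    eigMult A = Finset.univ.val.map hA.eigenvalues := by
  have hU1 : (hA.eigenvectorUnitary : Matrix (Fin k) (Fin k) ℝ)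
      * star (hA.eigenvectorUnitary : Matrix (Fin k) (Fin k) ℝ) = 1 :=
    Matrix.mem_unitaryGroup_iff.mp hA.eigenvectorUnitary.2
  have hd : A.charpoly = (Matrix.diagonal hA.eigenvalues).charpoly := by
    conv_lhs => rw [hA.spectral_theorem, Unitary.conjStarAlgAut_apply]
    rw [charpoly_conj' _ _ _ hU1]
    have hid : (RCLike.ofReal ∘ hA.eigenvalues) = hA.eigenvalues := by
      funext i; simp [RCLike.ofReal]
    rw [hid]
  rw [eigMult, hd, charpoly_diag, Finset.prod_eq_multiset_prod]
  have hmm : Multiset.map (fun i => X - C (hA.eigenvalues i)) Finset.univ.val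
      = Multiset.map (fun a => X - C a) (Multiset.map hA.eigenvalues Finset.univ.val) := by
    rw [Multiset.map_map]; rfl
  rw [hmm, Polynomial.roots_multiset_prod_X_sub_C]

end Aux4

/-- eigenvalue bound of Vontobel and Koetter: Let `H` be a
`(w_c, w_r)`-regular binary matrix with connected Tanner graph, and let `μ₁` and `μ₂` be the
largest and second largest eigenvalues (with multiplicity) of the real matrix `L = HᵀH`.
Then `μ₂ < μ₁`, every nonzero pseudocodeword `x ∈ K(H)` satisfies
`w_AWGNC(x) ≥ n (2 w_c - μ₂) / (μ₁ - μ₂)`, and in particular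
`w_AWGNC^min(H) ≥ n (2 w_c - μ₂) / (μ₁ - μ₂)`. -/
theorem statement10 {m n : ℕ} (H : Matrix (Fin m) (Fin n) (ZMod 2)) (wc wr : ℕ)
    (hcol : ∀ i, (Finset.univ.filter fun j => H j i = 1).card = wc)
    (hrow : ∀ j, (rowSupp H j).card = wr)
    (hconn : (tannerGraph H).Connected)
    (μ₁ μ₂ : ℝ)
    (hμ₁ : μ₁ ∈ eigMult ((toRealMatrix H)ᵀ * toRealMatrix H) ∧
      ∀ x ∈ eigMult ((toRealMatrix H)ᵀ * toRealMatrix H), x ≤ μ₁)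
    (hμ₂ : μ₂ ∈ (eigMult ((toRealMatrix H)ᵀ * toRealMatrix H)).erase μ₁ ∧
      ∀ x ∈ (eigMult ((toRealMatrix H)ᵀ * toRealMatrix H)).erase μ₁, x ≤ μ₂) :
    μ₂ < μ₁ ∧
    (∀ x ∈ fundCone H \ {0}, (n : ℝ) * (2 * (wc : ℝ) - μ₂) / (μ₁ - μ₂) ≤ wAWGNC x) ∧
    (((n : ℝ) * (2 * (wc : ℝ) - μ₂) / (μ₁ - μ₂) : ℝ) : EReal) ≤ minPW wAWGNC H := by
    classical
  set L : Matrix (Fin n) (Fin n) ℝ := (toRealMatrix H)ᵀ * toRealMatrix H with hLdef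
  have hLsymm : L.IsHermitian := by
    rw [Matrix.IsHermitian, Matrix.conjTranspose_eq_transpose_of_trivial,
      hLdef, Matrix.transpose_mul, Matrix.transpose_transpose]
  set eig := hLsymm.eigenvalues with heig
  have hmult : eigMult L = Finset.univ.val.map eig := eigMult_eq L hLsymm
  set U : Matrix (Fin n) (Fin n) ℝ := (hLsymm.eigenvectorUnitary : Matrix (Fin n) (Fin n) ℝ)
    with hUdef
  have hUU' : U * Uᵀ = 1 := by
    have h := Matrix.mem_unitaryGroup_iff.mp hLsymm.eigenvectorUnitary.2
    rwa [Matrix.star_eq_conjTranspose, Matrix.conjTranspose_eq_transpose_of_trivial] at h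
  have hU'U : Uᵀ * U = 1 := by
    have h := Matrix.mem_unitaryGroup_iff'.mp hLsymm.eigenvectorUnitary.2
    rwa [Matrix.star_eq_conjTranspose, Matrix.conjTranspose_eq_transpose_of_trivial] at h
  have hspec : L = U * Matrix.diagonal eig * Uᵀ := by
    have h := hLsymm.spectral_theorem
    rwa [Unitary.conjStarAlgAut_apply, Matrix.star_eq_conjTranspose, Matrix.conjTranspose_eq_transpose_of_trivial,
      (by funext i; simp [RCLike.ofReal, heig] :
        (RCLike.ofReal ∘ hLsymm.eigenvalues : Fin n → ℝ) = eig)] at h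
  have hcolU : ∀ i i', ∑ k, U k i * U k i' = if i = i' then (1 : ℝ) else 0 := by
    intro i i'
    have h := congrFun (congrFun hU'U i) i'
    rw [Matrix.mul_apply] at h
    simp only [Matrix.transpose_apply] at h
    rw [h, Matrix.one_apply]
  have heigvec : ∀ i, L *ᵥ (fun k => U k i) = eig i • (fun k => U k i) := by
    intro i
    have hfun : (fun k => U k i) = ⇑(hLsymm.eigenvectorBasis i) := by
      funext k; exact Matrix.IsHermitian.eigenvectorUnitary_apply hLsymm k i
    rw [hfun]
    exact hLsymm.mulVec_eigenvectorBasis i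
  obtain ⟨i₁, hi₁mem, hi₁⟩ : ∃ i ∈ Finset.univ.val, eig i = μ₁ := by
    have h := hμ₁.1
    rw [hmult] at h
    exact Multiset.mem_map.mp h
  have heig_le : ∀ i, eig i ≤ μ₁ := by
    intro i
    apply hμ₁.2
    rw [hmult]
    exact Multiset.mem_map_of_mem _ (by simp)
  set cwr : ℝ := (wc : ℝ) * wr with hcwrdef
  have hone : L *ᵥ (fun _ => (1 : ℝ)) = cwr • (fun _ => (1 : ℝ)) := mulVec_one_L hcol hrow
  have hdet0 : (L - cwr • 1).det = 0 := by
    rw [← Matrix.exists_mulVec_eq_zero_iff]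
    refine ⟨fun _ => 1, ?_, ?_⟩
    · intro h0
      have := congrFun h0 i₁
      simp at this
    · rw [Matrix.sub_mulVec, hone, Matrix.smul_mulVec, Matrix.one_mulVec, sub_self]
  have hsmul1 : (cwr • (1 : Matrix (Fin n) (Fin n) ℝ)) = Matrix.diagonal (fun _ => cwr) := by
    ext a b
    simp only [Matrix.smul_apply, Matrix.one_apply, Matrix.diagonal, Matrix.of_apply,
      smul_eq_mul]
    split_ifs <;> simp
  have hprod : ∃ i, eig i = cwr := by
    have hfact : L - cwr • 1 = U * (Matrix.diagonal eig - cwr • 1) * Uᵀ := by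
      rw [Matrix.mul_sub, Matrix.sub_mul, ← hspec]
      congr 1
      rw [mul_smul_comm, smul_mul_assoc, mul_one, hUU']
    have hdet2 : (L - cwr • 1).det = ∏ i, (eig i - cwr) := by
      rw [hfact, Matrix.det_mul, Matrix.det_mul]
      have hdetUU : U.det * Uᵀ.det = 1 := by rw [← Matrix.det_mul, hUU', Matrix.det_one]
      have hdiag : (Matrix.diagonal eig - cwr • 1).det = ∏ i, (eig i - cwr) := by
        rw [hsmul1, Matrix.diagonal_sub, Matrix.det_diagonal]
      calc U.det * (Matrix.diagonal eig - cwr • 1).det * Uᵀ.det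
          = (Matrix.diagonal eig - cwr • 1).det * (U.det * Uᵀ.det) := by ring
        _ = ∏ i, (eig i - cwr) := by rw [hdetUU, mul_one, hdiag]
    have hzero : ∏ i, (eig i - cwr) = 0 := by rw [← hdet2, hdet0]
    obtain ⟨i, -, hi⟩ := Finset.prod_eq_zero_iff.mp hzero
    exact ⟨i, by linarith [sub_eq_zero.mp hi]⟩
  have hub : ∀ i, eig i ≤ cwr := by
    intro i
    set v : Fin n → ℝ := fun k => U k i with hvdef
    have hvnorm : ∑ k, v k * v k = 1 := by
      have h := hcolU i i
      simpa using h
    obtain ⟨k₀, -, hk₀⟩ := Finset.exists_max_image Finset.univ (fun k => |v k|)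
      ⟨i₁, Finset.mem_univ _⟩
    have hk₀pos : 0 < |v k₀| := by
      rcases lt_or_ge 0 |v k₀| with h | h
      · exact h
      · exfalso
        have hall : ∀ k, v k = 0 := by
          intro k
          have h1 := hk₀ k (Finset.mem_univ k)
          have h2 := abs_nonneg (v k)
          have : |v k| = 0 := le_antisymm (h1.trans h) h2
          exact abs_eq_zero.mp this
        rw [Finset.sum_congr rfl (fun k _ => by rw [hall k, mul_zero])] at hvnorm
        simp at hvnorm
    have habs : |eig i| * |v k₀| ≤ cwr * |v k₀| := by
      have heq : eig i * v k₀ = ∑ k, L k₀ k * v k := by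
        have h := congrFun (heigvec i) k₀
        simp only [Matrix.mulVec, dotProduct, Pi.smul_apply, smul_eq_mul] at h
        rw [← h]
      calc |eig i| * |v k₀| = |eig i * v k₀| := (abs_mul _ _).symm
        _ = |∑ k, L k₀ k * v k| := by rw [heq]
        _ ≤ ∑ k, |L k₀ k * v k| := Finset.abs_sum_le_sum_abs _ _
        _ = ∑ k, L k₀ k * |v k| := Finset.sum_congr rfl fun k _ => by
            rw [abs_mul, abs_of_nonneg (Lentry_nonneg H k₀ k)]
        _ ≤ ∑ k, L k₀ k * |v k₀| := Finset.sum_le_sum fun k _ =>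
            mul_le_mul_of_nonneg_left (hk₀ k (Finset.mem_univ k)) (Lentry_nonneg H k₀ k)
        _ = (∑ k, L k₀ k) * |v k₀| := by rw [Finset.sum_mul]
        _ = cwr * |v k₀| := by rw [rowSumL hcol hrow k₀]
    have h2 : |eig i| ≤ cwr := le_of_mul_le_mul_right habs hk₀pos
    linarith [le_abs_self (eig i)]
  have hμ₁cwr : μ₁ = cwr := by
    obtain ⟨i, hi⟩ := hprod
    exact le_antisymm (hi₁ ▸ hub i₁) (hi ▸ heig_le i)
  have hconst : ∀ i, eig i = cwr → ∀ k k', U k i = U k' i := by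
    intro i hie k k'
    refine perron_const hcol hrow hconn (fun k => U k i) ?_ k k'
    rw [heigvec i, hie]
  set κ : ℝ := U i₁ i₁ with hκdef
  have hκall : ∀ k, U k i₁ = κ := fun k => hconst i₁ (hi₁.trans hμ₁cwr) k i₁
  have norm_const : ∀ i, (∀ k, U k i = U i i) → (n : ℝ) * (U i i) ^ 2 = 1 := by
    intro i hcst
    have h := hcolU i i
    rw [if_pos rfl] at h
    rw [Finset.sum_congr rfl (fun k _ => by rw [hcst k])] at h
    rw [Finset.sum_const, Finset.card_univ, Fintype.card_fin, nsmul_eq_mul] at h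
    nlinarith [h]
  have hκn : (n : ℝ) * κ ^ 2 = 1 := norm_const i₁ hκall
  have hsimp : ∀ i, eig i = μ₁ → i = i₁ := by
    intro i hie
    by_contra hne
    have hcst : ∀ k, U k i = U i i := fun k => hconst i (hie.trans hμ₁cwr) k i
    have hn2 : (n : ℝ) * (U i i) ^ 2 = 1 := norm_const i hcst
    have horth : (n : ℝ) * (κ * U i i) = 0 := by
      have h := hcolU i₁ i
      rw [if_neg (fun hh => hne (hh.symm))] at h
      rw [Finset.sum_congr rfl (fun k _ => by rw [hκall k, hcst k])] at h
      rw [Finset.sum_const, Finset.card_univ, Fintype.card_fin, nsmul_eq_mul] at h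
      exact h
    nlinarith [hκn, hn2, horth]
  have herase : (eigMult L).erase μ₁ = (Finset.univ.val.erase i₁).map eig := by
    rw [hmult]
    have huniv : Finset.univ.val = i₁ ::ₘ Finset.univ.val.erase i₁ :=
      (Multiset.cons_erase hi₁mem).symm
    conv_lhs => rw [huniv]
    rw [Multiset.map_cons, hi₁, Multiset.erase_cons_head]
  obtain ⟨i₂, hi₂mem, hi₂⟩ : ∃ i ∈ Finset.univ.val.erase i₁, eig i = μ₂ := by
    have h := hμ₂.1
    rw [herase] at h
    exact Multiset.mem_map.mp h
  have hi₂ne : i₂ ≠ i₁ :=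
    ((Finset.univ.nodup.mem_erase_iff).mp hi₂mem).1
  have hμ₂lt : μ₂ < μ₁ := by
    refine lt_of_le_of_ne (hi₂ ▸ heig_le i₂) fun h => hi₂ne (hsimp i₂ (hi₂.trans h))
  have heig2_le : ∀ i, i ≠ i₁ → eig i ≤ μ₂ := by
    intro i hne
    apply hμ₂.2
    rw [herase]
    exact Multiset.mem_map_of_mem _ ((Finset.univ.nodup.mem_erase_iff).mpr ⟨hne, by simp⟩)
  have main : ∀ x ∈ fundCone H \ {0}, (n : ℝ) * (2 * (wc : ℝ) - μ₂) / (μ₁ - μ₂) ≤ wAWGNC x := by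
    rintro x ⟨hxK, hx0⟩
    have hxne : x ≠ 0 := hx0
    obtain ⟨i₀, hi₀⟩ : ∃ i, x i ≠ 0 := by
      by_contra hc
      push_neg at hc
      exact hxne (funext hc)
    have hQpos : 0 < ∑ i, x i ^ 2 := by
      have h1 : 0 < x i₀ ^ 2 := by positivity
      exact lt_of_lt_of_le h1 (Finset.single_le_sum (fun i _ => sq_nonneg (x i))
        (Finset.mem_univ i₀))
    set c : Fin n → ℝ := Uᵀ *ᵥ x with hcdef
    have hcc : ∑ i, c i ^ 2 = ∑ i, x i ^ 2 := by
      have h1 : c ⬝ᵥ c = x ⬝ᵥ x := by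
        rw [hcdef, Matrix.dotProduct_mulVec, Matrix.vecMul_transpose, Matrix.mulVec_mulVec,
          hUU', Matrix.one_mulVec]
      simpa [dotProduct, sq] using h1
    have hci₁ : c i₁ = κ * ∑ i, x i := by
      rw [hcdef]
      simp only [Matrix.mulVec, dotProduct, Matrix.transpose_apply]
      rw [Finset.sum_congr rfl fun k _ => by rw [hκall k], ← Finset.mul_sum]
    have hq : x ⬝ᵥ (L *ᵥ x) = ∑ i, eig i * c i ^ 2 := by
      conv_lhs => rw [hspec]
      rw [← Matrix.mulVec_mulVec, ← Matrix.mulVec_mulVec, Matrix.dotProduct_mulVec]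
      have hxU : x ᵥ* U = c := by
        conv_lhs => rw [← Matrix.transpose_transpose U]
        rw [Matrix.vecMul_transpose, hcdef]
      rw [hxU, dotProduct]
      refine Finset.sum_congr rfl fun i _ => ?_
      rw [Matrix.mulVec_diagonal]
      ring
    have hxLx : 2 * (wc : ℝ) * ∑ i, x i ^ 2 ≤ ∑ i, eig i * c i ^ 2 := by
      rw [← hq, quad_eq H x]
      exact cone_bound hcol hxK
    have hsplit : ∑ i, eig i * c i ^ 2
        = eig i₁ * c i₁ ^ 2 + ∑ i ∈ Finset.univ.erase i₁, eig i * c i ^ 2 :=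
      (Finset.add_sum_erase _ _ (Finset.mem_univ i₁)).symm
    have hsplit2 : ∑ i, c i ^ 2 = c i₁ ^ 2 + ∑ i ∈ Finset.univ.erase i₁, c i ^ 2 :=
      (Finset.add_sum_erase _ _ (Finset.mem_univ i₁)).symm
    have hb : ∑ i ∈ Finset.univ.erase i₁, eig i * c i ^ 2
        ≤ μ₂ * ∑ i ∈ Finset.univ.erase i₁, c i ^ 2 := by
      rw [Finset.mul_sum]
      refine Finset.sum_le_sum fun i hi => ?_
      exact mul_le_mul_of_nonneg_right (heig2_le i (Finset.mem_erase.mp hi).1) (sq_nonneg _)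
    have hcsq : c i₁ ^ 2 = κ ^ 2 * (∑ i, x i) ^ 2 := by rw [hci₁]; ring
    have key : (2 * (wc : ℝ) - μ₂) * ∑ i, x i ^ 2
        ≤ (μ₁ - μ₂) * (κ ^ 2 * (∑ i, x i) ^ 2) := by
      have h1 : eig i₁ * c i₁ ^ 2 = μ₁ * (κ ^ 2 * (∑ i, x i) ^ 2) := by rw [hi₁, hcsq]
      have h2 : ∑ i ∈ Finset.univ.erase i₁, c i ^ 2
          = ∑ i, x i ^ 2 - κ ^ 2 * (∑ i, x i) ^ 2 := by
        rw [← hcc, hsplit2, hcsq]; ring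
      rw [h2] at hb
      nlinarith [hxLx, hsplit, hb, h1]
    rw [wAWGNC, div_le_div_iff₀ (by linarith) hQpos]
    have h5 := mul_le_mul_of_nonneg_left key (show (0:ℝ) ≤ (n:ℝ) from Nat.cast_nonneg n)
    have h6 : (n : ℝ) * ((μ₁ - μ₂) * (κ ^ 2 * (∑ i, x i) ^ 2))
        = (∑ i, x i) ^ 2 * (μ₁ - μ₂) := by
      have h7 : (n : ℝ) * ((μ₁ - μ₂) * (κ ^ 2 * (∑ i, x i) ^ 2))
          = ((μ₁ - μ₂) * (∑ i, x i) ^ 2) * ((n : ℝ) * κ ^ 2) := by ring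
      rw [h7, hκn]; ring
    calc (n : ℝ) * (2 * (wc : ℝ) - μ₂) * ∑ i, x i ^ 2
        = (n : ℝ) * ((2 * (wc : ℝ) - μ₂) * ∑ i, x i ^ 2) := by ring
      _ ≤ (n : ℝ) * ((μ₁ - μ₂) * (κ ^ 2 * (∑ i, x i) ^ 2)) := h5
      _ = (∑ i, x i) ^ 2 * (μ₁ - μ₂) := h6
  refine ⟨hμ₂lt, main, ?_⟩
  rw [minPW]
  apply le_sInf
  rintro y ⟨x, hx, rfl⟩
  exact EReal.coe_le_coe_iff.mpr (main x hx)
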